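/- Let θ be an irrational number in (0,1) with continued fraction convergents p_n/q_n. Then for any integers n ≥ 1, ℓ ≥ 0, and 1 ≤ r ≤ q_{n+1} - 1, one has ⌊(q_{n+ℓ} + q_{n+ℓ-1} + ... + q_n + r)θ⌋ = p_{n+ℓ} + p_{n+ℓ-1} + ... + p_n + ⌊rθ⌋. -/

import Mathlib

/-- The Gauss-map iterates of `θ`: `cfTheta θ 0 = θ` and
`cfTheta θ (n+1) = {1 / cfTheta θ n}` (fractional part), so that
`θ = [0; a₁, a₂, ...]` with `aₙ = ⌊1 / cfTheta θ (n-1)⌋`. -/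
noncomputable def cfTheta (θ : ℝ) : ℕ → ℝ
  | 0 => θ
  | n + 1 => Int.fract (1 / cfTheta θ n)

/-- The `n`-th partial quotient `aₙ` (for `n ≥ 1`) of the continued fraction
expansion `θ = [0; a₁, a₂, ...]` of `θ ∈ (0,1)`. -/
noncomputable def cfA (θ : ℝ) (n : ℕ) : ℤ := ⌊1 / cfTheta θ (n - 1)⌋

/-- Numerators `pₙ` of the convergents of `θ = [0; a₁, a₂, ...]`:
`p₋₁ = 1`, `p₀ = 0`, `p_{n+1} = a_{n+1} pₙ + p_{n-1}`. -/
noncomputable def cfP (θ : ℝ) : ℕ → ℤ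
  | 0 => 0
  | 1 => 1
  | n + 2 => cfA θ (n + 2) * cfP θ (n + 1) + cfP θ n

/-- Denominators `qₙ` of the convergents of `θ = [0; a₁, a₂, ...]`:
`q₋₁ = 0`, `q₀ = 1`, `q_{n+1} = a_{n+1} qₙ + q_{n-1}`. -/
noncomputable def cfQ (θ : ℝ) : ℕ → ℤ
  | 0 => 1
  | 1 => cfA θ 1
  | n + 2 => cfA θ (n + 2) * cfQ θ (n + 1) + cfQ θ n

/-- The product `βₙ = θ₀ θ₁ ⋯ θₙ` of the Gauss-map iterates. -/
noncomputable def cfB (θ : ℝ) : ℕ → ℝ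
  | 0 => θ
  | n + 1 => cfB θ n * cfTheta θ (n + 1)

section aux

variable {θ : ℝ} (hθ : Irrational θ) (hθ01 : θ ∈ Set.Ioo (0:ℝ) 1)

include hθ hθ01

lemma cfTheta_prop : ∀ n, Irrational (cfTheta θ n) ∧ cfTheta θ n ∈ Set.Ioo (0:ℝ) 1 := by
  intro n
  induction n with
  | zero => exact ⟨hθ, hθ01⟩
  | succ m ih =>
    obtain ⟨hi, h0, h1⟩ := ih
    have hinv : Irrational (1 / cfTheta θ m) := by
      simpa [one_div] using hi.inv
    have hfr : Irrational (Int.fract (1 / cfTheta θ m)) := by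
      rw [← Int.self_sub_floor]
      exact hinv.sub_intCast _
    refine ⟨hfr, lt_of_le_of_ne (Int.fract_nonneg _) (Ne.symm hfr.ne_zero), Int.fract_lt_one _⟩

lemma cfTheta_pos (n : ℕ) : 0 < cfTheta θ n := (cfTheta_prop hθ hθ01 n).2.1

lemma cfTheta_lt_one (n : ℕ) : cfTheta θ n < 1 := (cfTheta_prop hθ hθ01 n).2.2

lemma cfTheta_succ_eq (n : ℕ) :
    cfTheta θ (n + 1) = 1 / cfTheta θ n - (cfA θ (n + 1) : ℝ) := by
  show Int.fract (1 / cfTheta θ n) = _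
  rw [← Int.self_sub_floor]
  rfl

lemma cfA_pos (n : ℕ) : 1 ≤ cfA θ (n + 1) := by
  have h0 := cfTheta_pos hθ hθ01 n
  have h1 := cfTheta_lt_one hθ hθ01 n
  have : (1 : ℝ) ≤ 1 / cfTheta θ n := by
    rw [le_div_iff₀ h0]; linarith
  exact Int.le_floor.mpr (by exact_mod_cast this)

lemma cfB_pos (n : ℕ) : 0 < cfB θ n := by
  induction n with
  | zero => exact hθ01.1
  | succ m ih => exact mul_pos ih (cfTheta_pos hθ hθ01 (m + 1))

lemma cfB_succ_lt (n : ℕ) : cfB θ (n + 1) < cfB θ n := by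
  have h := cfB_pos hθ hθ01 n
  have h1 := cfTheta_lt_one hθ hθ01 (n + 1)
  have h0 := cfTheta_pos hθ hθ01 (n + 1)
  calc cfB θ (n + 1) = cfB θ n * cfTheta θ (n + 1) := rfl
    _ < cfB θ n * 1 := by exact mul_lt_mul_of_pos_left h1 h
    _ = cfB θ n := mul_one _

lemma cf_key : ∀ n, (cfQ θ n : ℝ) * θ - (cfP θ n : ℝ) = (-1) ^ n * cfB θ n := by
  intro n
  induction n using Nat.twoStepInduction with
  | zero => simp [cfP, cfQ, cfB]
  | one =>
    have h1 : cfTheta θ 1 = 1 / θ - (cfA θ 1 : ℝ) := cfTheta_succ_eq hθ hθ01 0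
    have h0 : θ ≠ 0 := ne_of_gt hθ01.1
    have e1 : cfQ θ 1 = cfA θ 1 := rfl
    have e2 : cfP θ 1 = (1 : ℤ) := rfl
    have e3 : cfB θ 1 = θ * cfTheta θ 1 := rfl
    rw [e1, e2, e3, h1]
    push_cast
    field_simp
    ring
  | more m ih ih1 =>
    have ht : cfTheta θ (m + 1) ≠ 0 := ne_of_gt (cfTheta_pos hθ hθ01 (m + 1))
    have h2 : cfTheta θ (m + 2) = 1 / cfTheta θ (m + 1) - (cfA θ (m + 2) : ℝ) :=
      cfTheta_succ_eq hθ hθ01 (m + 1)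
    have key2 : cfTheta θ (m + 1) * cfTheta θ (m + 2)
        = 1 - (cfA θ (m + 2) : ℝ) * cfTheta θ (m + 1) := by
      rw [h2]; field_simp
    have hq : cfQ θ (m + 2) = cfA θ (m + 2) * cfQ θ (m + 1) + cfQ θ m := rfl
    have hp : cfP θ (m + 2) = cfA θ (m + 2) * cfP θ (m + 1) + cfP θ m := rfl
    have hb2 : cfB θ (m + 2) = cfB θ (m + 1) * cfTheta θ (m + 2) := rfl
    have hb1 : cfB θ (m + 1) = cfB θ m * cfTheta θ (m + 1) := rfl
    rw [hq, hp, hb2]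
    push_cast
    rw [hb1] at ih1 ⊢
    linear_combination (cfA θ (m + 2) : ℝ) * ih1 + ih - (-1) ^ m * cfB θ m * key2

lemma cfQ_ge_one : ∀ n, 1 ≤ cfQ θ n := by
  intro n
  induction n using Nat.twoStepInduction with
  | zero => simp [cfQ]
  | one => exact cfA_pos hθ hθ01 0
  | more m ih ih1 =>
    have ha := cfA_pos hθ hθ01 (m + 1)
    show 1 ≤ cfA θ (m + 2) * cfQ θ (m + 1) + cfQ θ m
    nlinarith

lemma cf_det : ∀ n, cfP θ (n + 1) * cfQ θ n - cfP θ n * cfQ θ (n + 1) = (-1) ^ n := by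
  intro n
  induction n with
  | zero => simp [cfP, cfQ]
  | succ m ih =>
    have hq : cfQ θ (m + 2) = cfA θ (m + 2) * cfQ θ (m + 1) + cfQ θ m := rfl
    have hp : cfP θ (m + 2) = cfA θ (m + 2) * cfP θ (m + 1) + cfP θ m := rfl
    rw [hp, hq, pow_succ]
    linear_combination (-1 : ℤ) * ih

lemma cf_best (n : ℕ) (r s : ℤ) (hr1 : 1 ≤ r) (hr2 : r ≤ cfQ θ (n + 1) - 1) :
    cfB θ n ≤ |(r : ℝ) * θ - (s : ℝ)| := by
  have det := cf_det hθ hθ01 n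
  have he : ((-1 : ℤ) ^ n) * ((-1) ^ n) = 1 := by
    rw [← mul_pow]; norm_num
  set e : ℤ := (-1) ^ n with hedef
  set x : ℤ := e * (r * cfP θ (n + 1) - s * cfQ θ (n + 1)) with hxdef
  set y : ℤ := e * (s * cfQ θ n - r * cfP θ n) with hydef
  have hx : x * cfQ θ n + y * cfQ θ (n + 1) = r := by
    rw [hxdef, hydef]; linear_combination e * r * det + r * he
  have hy : x * cfP θ n + y * cfP θ (n + 1) = s := by
    rw [hxdef, hydef]; linear_combination e * s * det + s * he
  have hx' : (x : ℝ) * (cfQ θ n : ℝ) + (y : ℝ) * (cfQ θ (n + 1) : ℝ) = (r : ℝ) := by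
    exact_mod_cast congrArg (Int.cast : ℤ → ℝ) hx
  have hy' : (x : ℝ) * (cfP θ n : ℝ) + (y : ℝ) * (cfP θ (n + 1) : ℝ) = (s : ℝ) := by
    exact_mod_cast congrArg (Int.cast : ℤ → ℝ) hy
  have kn := cf_key hθ hθ01 n
  have k1 := cf_key hθ hθ01 (n + 1)
  have hreal : (r : ℝ) * θ - (s : ℝ)
      = (-1) ^ n * ((x : ℝ) * cfB θ n - (y : ℝ) * cfB θ (n + 1)) := by
    have expand : (r : ℝ) * θ - (s : ℝ)
        = (x : ℝ) * ((cfQ θ n : ℝ) * θ - cfP θ n)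
          + (y : ℝ) * ((cfQ θ (n + 1) : ℝ) * θ - cfP θ (n + 1)) := by
      linear_combination θ * hx'.symm + hy'
    rw [expand, kn, k1, pow_succ]
    ring
  rw [hreal, abs_mul, abs_pow, abs_neg, abs_one, one_pow, one_mul]
  have hBn := cfB_pos hθ hθ01 n
  have hB1 := cfB_pos hθ hθ01 (n + 1)
  have hQn := cfQ_ge_one hθ hθ01 n
  have hQ1 := cfQ_ge_one hθ hθ01 (n + 1)
  rcases lt_trichotomy y 0 with hy0 | hy0 | hy0
  · -- y < 0 : need x ≥ 1 (x ≤ 0 would give r ≤ ... ≤ 0 or negative)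
    have hx1 : 1 ≤ x := by nlinarith
    have hy1 : y ≤ -1 := by omega
    have hx1' : (1 : ℝ) ≤ (x : ℝ) := by exact_mod_cast hx1
    have hy1' : (y : ℝ) ≤ -1 := by exact_mod_cast hy1
    refine le_trans ?_ (le_abs_self _)
    nlinarith
  · -- y = 0 : x * q_n = r, so x ≥ 1
    rw [hy0] at hx
    rw [hy0]
    simp only [Int.cast_zero, zero_mul, sub_zero, add_zero] at hx ⊢
    have hx1 : 1 ≤ x := by nlinarith
    have hx1' : (1 : ℝ) ≤ (x : ℝ) := by exact_mod_cast hx1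
    refine le_trans ?_ (le_abs_self _)
    nlinarith
  · -- y > 0 : then x ≤ -1 (x = 0 gives r ≥ q_{n+1}; x ≥ 1 gives r too big)
    have hy1 : 1 ≤ y := hy0
    have hx1 : x ≤ -1 := by
      rcases lt_trichotomy x 0 with h | h | h
      · omega
      · exfalso; rw [h] at hx; nlinarith
      · exfalso; nlinarith
    have hx1' : (x : ℝ) ≤ -1 := by exact_mod_cast hx1
    have hy1' : (1 : ℝ) ≤ (y : ℝ) := by exact_mod_cast hy1
    refine le_trans ?_ (neg_le_abs _)
    nlinarith

lemma cf_T (k : ℕ) : ∀ m, 0 < ∑ i ∈ Finset.range (k + 1), (-1 : ℝ) ^ i * cfB θ (m + i) ∧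
    ∑ i ∈ Finset.range (k + 1), (-1 : ℝ) ^ i * cfB θ (m + i) ≤ cfB θ m := by
  induction k with
  | zero =>
    intro m
    have h : ∑ i ∈ Finset.range (0 + 1), (-1 : ℝ) ^ i * cfB θ (m + i) = cfB θ m := by simp
    rw [h]
    exact ⟨cfB_pos hθ hθ01 m, le_refl _⟩
  | succ k ih =>
    intro m
    obtain ⟨h1, h2⟩ := ih (m + 1)
    have hlt := cfB_succ_lt hθ hθ01 m
    have hrw : ∑ i ∈ Finset.range (k + 2), (-1 : ℝ) ^ i * cfB θ (m + i)
        = cfB θ m - ∑ i ∈ Finset.range (k + 1), (-1 : ℝ) ^ i * cfB θ (m + 1 + i) := by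
      rw [Finset.sum_range_succ']
      have hterm : ∀ i ∈ Finset.range (k + 1),
          (-1 : ℝ) ^ (i + 1) * cfB θ (m + (i + 1)) = -((-1 : ℝ) ^ i * cfB θ (m + 1 + i)) := by
        intro i _
        have hi : m + (i + 1) = m + 1 + i := by omega
        rw [hi, pow_succ]
        ring
      rw [Finset.sum_congr rfl hterm, Finset.sum_neg_distrib]
      simp only [pow_zero, one_mul, Nat.add_zero]
      ring
    rw [hrw]
    constructor
    · linarith
    · linarith

end aux

/-- For `θ ∈ (0,1)` irrational with convergents `pₙ/qₙ`: for `n ≥ 1`, `ℓ ≥ 0`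
and `1 ≤ r ≤ q_{n+1} - 1`, one has
`⌊(q_{n+ℓ} + q_{n+ℓ-1} + ⋯ + qₙ + r)θ⌋ = p_{n+ℓ} + p_{n+ℓ-1} + ⋯ + pₙ + ⌊rθ⌋`. -/
theorem floor_sum_q_add (θ : ℝ) (hθ : Irrational θ) (hθ01 : θ ∈ Set.Ioo (0:ℝ) 1)
    (n : ℕ) (hn : 1 ≤ n) (ℓ : ℕ) (r : ℤ) (hr1 : 1 ≤ r) (hr2 : r ≤ cfQ θ (n + 1) - 1) :
    ⌊(((∑ i ∈ Finset.range (ℓ + 1), cfQ θ (n + i)) + r : ℤ) : ℝ) * θ⌋ =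
      (∑ i ∈ Finset.range (ℓ + 1), cfP θ (n + i)) + ⌊(r : ℝ) * θ⌋ := by
  set P : ℤ := ∑ i ∈ Finset.range (ℓ + 1), cfP θ (n + i) with hPdef
  set T : ℝ := ∑ i ∈ Finset.range (ℓ + 1), (-1 : ℝ) ^ i * cfB θ (n + i) with hTdef
  obtain ⟨hT1, hT2⟩ := cf_T hθ hθ01 ℓ n
  have hBn := cfB_pos hθ hθ01 n
  have hQn := cfQ_ge_one hθ hθ01 n
  -- rewrite the argument of the floor
  have hterm : ∀ i ∈ Finset.range (ℓ + 1), (cfQ θ (n + i) : ℝ) * θ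
      = (cfP θ (n + i) : ℝ) + (-1) ^ n * ((-1 : ℝ) ^ i * cfB θ (n + i)) := by
    intro i _
    have h := cf_key hθ hθ01 (n + i)
    rw [pow_add] at h
    linarith [h]
  have hsum : (((∑ i ∈ Finset.range (ℓ + 1), cfQ θ (n + i)) + r : ℤ) : ℝ) * θ
      = ((r : ℝ) * θ + (-1) ^ n * T) + (P : ℝ) := by
    push_cast
    rw [add_mul, Finset.sum_mul, Finset.sum_congr rfl hterm, Finset.sum_add_distrib,
      ← Finset.mul_sum, ← hTdef]
    push_cast [hPdef]
    ring
  rw [hsum, Int.floor_add_intCast]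
  -- key facts about fract (r θ)
  set F : ℝ := Int.fract ((r : ℝ) * θ) with hFdef
  have hFeq : F = (r : ℝ) * θ - (⌊(r : ℝ) * θ⌋ : ℝ) := (Int.self_sub_floor _).symm
  have hb1 : cfB θ n ≤ F := by
    have := cf_best hθ hθ01 n r ⌊(r : ℝ) * θ⌋ hr1 hr2
    rwa [← hFeq, abs_of_nonneg (Int.fract_nonneg _)] at this
  have hb2 : F ≤ 1 - cfB θ n := by
    have h := cf_best hθ hθ01 n r (⌊(r : ℝ) * θ⌋ + 1) hr1 hr2
    have : (r : ℝ) * θ - ((⌊(r : ℝ) * θ⌋ + 1 : ℤ) : ℝ) = F - 1 := by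
      push_cast; rw [hFeq]; ring
    rw [this, abs_of_nonpos (by linarith [Int.fract_lt_one ((r : ℝ) * θ)])] at h
    linarith
  have hirr : ∀ k : ℤ, ((r + cfQ θ n : ℤ) : ℝ) * θ ≠ (k : ℝ) := by
    intro k hk
    have hc : ((r + cfQ θ n : ℤ) : ℝ) ≠ 0 := by
      have : (0 : ℤ) < r + cfQ θ n := by omega
      exact_mod_cast this.ne'
    refine hθ ⟨(k : ℚ) / ((r + cfQ θ n : ℤ) : ℚ), ?_⟩
    have hc' : ((r : ℝ) + (cfQ θ n : ℝ)) ≠ 0 := by push_cast at hc; exact hc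
    push_cast at hk ⊢
    rw [div_eq_iff hc']
    linear_combination -hk
  have hkey := cf_key hθ hθ01 n
  -- d := q_n θ - p_n; strict bounds on F + d
  have hd1 : 0 < F + ((cfQ θ n : ℝ) * θ - (cfP θ n : ℝ)) := by
    rcases Nat.even_or_odd n with he | ho
    · have : (-1 : ℝ) ^ n = 1 := he.neg_one_pow
      rw [hkey, this, one_mul]; linarith
    · -- d = -B n; need F > B n, i.e. F ≠ B n
      have hne : F ≠ cfB θ n := by
        intro habs
        apply hirr (cfP θ n + ⌊(r : ℝ) * θ⌋)
        have : (-1 : ℝ) ^ n = -1 := ho.neg_one_pow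
        rw [this] at hkey
        push_cast
        rw [hFeq] at habs
        linarith [habs, hkey]
      have : cfB θ n < F := lt_of_le_of_ne hb1 (Ne.symm hne)
      have hd : (-1 : ℝ) ^ n = -1 := ho.neg_one_pow
      rw [hkey, hd]; linarith
  have hd2 : F + ((cfQ θ n : ℝ) * θ - (cfP θ n : ℝ)) < 1 := by
    rcases Nat.even_or_odd n with he | ho
    · -- d = B n; need F < 1 - B n, i.e. F ≠ 1 - B n
      have hne : F ≠ 1 - cfB θ n := by
        intro habs
        apply hirr (cfP θ n + ⌊(r : ℝ) * θ⌋ + 1)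
        have : (-1 : ℝ) ^ n = 1 := he.neg_one_pow
        rw [this, one_mul] at hkey
        push_cast
        rw [hFeq] at habs
        linarith [habs, hkey]
      have : F < 1 - cfB θ n := lt_of_le_of_ne hb2 hne
      have hd : (-1 : ℝ) ^ n = 1 := he.neg_one_pow
      rw [hkey, hd, one_mul]; linarith
    · have hd : (-1 : ℝ) ^ n = -1 := ho.neg_one_pow
      rw [hkey, hd]
      have := Int.fract_lt_one ((r : ℝ) * θ)
      rw [← hFdef] at this
      linarith
  have hfl : ⌊(r : ℝ) * θ + (-1) ^ n * T⌋ = ⌊(r : ℝ) * θ⌋ := by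
    rw [Int.floor_eq_iff]
    constructor
    · rcases Nat.even_or_odd n with he | ho
      · rw [he.neg_one_pow, one_mul]
        have : 0 ≤ F := Int.fract_nonneg _
        rw [hFeq] at this; linarith
      · rw [ho.neg_one_pow]
        have hd : (-1 : ℝ) ^ n = -1 := ho.neg_one_pow
        rw [hkey, hd] at hd1
        rw [hFeq] at hd1
        -- 0 < F - B n ≤ F - T
        nlinarith [hd1, hT2, hFeq]
    · push_cast
      rcases Nat.even_or_odd n with he | ho
      · rw [he.neg_one_pow, one_mul]
        have hd : (-1 : ℝ) ^ n = 1 := he.neg_one_pow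
        rw [hkey, hd, one_mul] at hd2
        rw [hFeq] at hd2
        linarith
      · rw [ho.neg_one_pow]
        have : F < 1 := Int.fract_lt_one _
        rw [hFeq] at this
        linarith
  rw [hfl]
  omega
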